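/- arXiv:0905.4219 — 2 statements merged into one kernel-verified Lean document; each statement's English description precedes it below -/
import Mathlib

section
/- Consider a GSWF on three alternatives with n voters satisfying the IIA condition, whose choice functions f, g, h : {0,1}^n → {0,1} are monotone increasing. If the individual preferences are distributed according to an even product distribution D(α,β,γ) with α, β, γ ≤ 1/4, then the probability of irrational choice satisfies W(f,g,h) ≤ p₁p₂p₃ + (1−p₁)(1−p₂)(1−p₃), where p₁ = E[f], p₂ = E[g], p₃ = E[h]. -/
open Finset Real

noncomputable section

namespace GSWF

/-- Walsh function `r_S(x) = ∏_{i∈S} (2 x_i - 1)` on the discrete cube. -/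
def walsh {n : ℕ} (S : Finset (Fin n)) (x : Fin n → Bool) : ℝ :=
  ∏ i ∈ S, (if x i then (1 : ℝ) else -1)

/-- Fourier–Walsh coefficient `f̂(S) = 2^{-n} ∑_x f(x) r_S(x)`. -/
def coeff {n : ℕ} (f : (Fin n → Bool) → ℝ) (S : Finset (Fin n)) : ℝ :=
  (∑ x : Fin n → Bool, f x * walsh S x) / 2 ^ n

/-- Expectation under the uniform measure on the discrete cube. -/
def expect {n : ℕ} (f : (Fin n → Bool) → ℝ) : ℝ :=
  (∑ x : Fin n → Bool, f x) / 2 ^ n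

/-- Biased inner product `⟨⟨f,g⟩⟩_δ = ∑_{S ≠ ∅} f̂(S) ĝ(S) δ^{|S|}`. -/
def bip {n : ℕ} (δ : ℝ) (f g : (Fin n → Bool) → ℝ) : ℝ :=
  ∑ S ∈ Finset.univ.filter (fun S : Finset (Fin n) => S ≠ ∅),
    coeff f S * coeff g S * δ ^ S.card

/-- Probability of a single voter's preference triple under `D(α,β,γ)`. -/
def prTriple (α β γ : ℝ) : Bool → Bool → Bool → ℝ
  | true, true, false => α
  | false, false, true => α
  | false, true, true => β
  | true, false, false => β
  | true, false, true => γ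
  | false, true, false => γ
  | _, _, _ => 0

/-- Probability of a profile under the even product distribution `D(α,β,γ)`. -/
def prProfile {n : ℕ} (α β γ : ℝ) (x y z : Fin n → Bool) : ℝ :=
  ∏ i, prTriple α β γ (x i) (y i) (z i)

/-- Probability of an irrational outcome `W(f,g,h)` under `D(α,β,γ)`. -/
def W {n : ℕ} (α β γ : ℝ) (f g h : (Fin n → Bool) → ℝ) : ℝ :=
  ∑ x : Fin n → Bool, ∑ y : Fin n → Bool, ∑ z : Fin n → Bool,
    prProfile α β γ x y z *
      (f x * g y * h z + (1 - f x) * (1 - g y) * (1 - h z))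

/-- A real-valued function on the cube that takes only the values 0 and 1. -/
def IsBooleanFn {n : ℕ} (f : (Fin n → Bool) → ℝ) : Prop :=
  ∀ x, f x = 0 ∨ f x = 1

/-- Monotone increasing function on the discrete cube. -/
def MonotoneCube {n : ℕ} (f : (Fin n → Bool) → ℝ) : Prop :=
  ∀ x y : Fin n → Bool, (∀ i, x i ≤ y i) → f x ≤ f y

/-- Monotone decreasing function on the discrete cube. -/
def AntitoneCube {n : ℕ} (f : (Fin n → Bool) → ℝ) : Prop :=
  ∀ x y : Fin n → Bool, (∀ i, x i ≤ y i) → f y ≤ f x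

/-- Invariance under a transitive group of permutations of the coordinates. -/
def TransitiveSymmetric {n : ℕ} (f : (Fin n → Bool) → ℝ) : Prop :=
  ∃ G : Subgroup (Equiv.Perm (Fin n)),
    (∀ i j : Fin n, ∃ σ ∈ G, σ i = j) ∧
    ∀ σ ∈ G, ∀ x : Fin n → Bool, f (x ∘ σ) = f x

/-- The majority function: 1 iff more than half of the coordinates are 1. -/
def maj (n : ℕ) (x : Fin n → Bool) : ℝ :=
  if n < 2 * (Finset.univ.filter (fun i => x i = true)).card then 1 else 0

/-- The dual function `f'(x) = 1 - f(1-x)`. -/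
def dualFn {n : ℕ} (f : (Fin n → Bool) → ℝ) (x : Fin n → Bool) : ℝ :=
  1 - f (fun i => !(x i))

/-- The Bonamie–Beckner noise operator `T_δ`. -/
def Tnoise {n : ℕ} (δ : ℝ) (f : (Fin n → Bool) → ℝ) (x : Fin n → Bool) : ℝ :=
  ∑ S : Finset (Fin n), δ ^ S.card * coeff f S * walsh S x

/-- The AND function on the discrete cube. -/
def andFn (n : ℕ) (x : Fin n → Bool) : ℝ :=
  if ∀ i, x i = true then 1 else 0

/-- The OR function on the discrete cube (the dual of AND). -/
def orFn (n : ℕ) (x : Fin n → Bool) : ℝ :=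
  if ∃ i, x i = true then 1 else 0


/-! ### Auxiliary machinery for Statement 7 -/

/-- Pair weight: `a` on the diagonal, `b` off it. -/
def pairW (a b : ℝ) (s t : Bool) : ℝ := if s = t then a else b

lemma sum_pi_succ {n : ℕ} (φ : (Fin (n+1) → Bool) → ℝ) :
    ∑ x : Fin (n+1) → Bool, φ x = ∑ s : Bool, ∑ x : Fin n → Bool, φ (Fin.cons s x) := by
  have h := Fintype.sum_equiv (Fin.consEquiv fun _ : Fin (n+1) => Bool)
    (fun p : Bool × (Fin n → Bool) => φ (Fin.cons p.1 p.2)) φ (fun p => rfl)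
  rw [← h, Fintype.sum_prod_type]

lemma cons_le_cons {n : ℕ} {s t : Bool} {x y : Fin n → Bool} (hst : s ≤ t)
    (hxy : ∀ i, x i ≤ y i) :
    ∀ i, Fin.cons (α := fun _ => Bool) s x i ≤ Fin.cons (α := fun _ => Bool) t y i := by
  intro i
  rcases Fin.eq_zero_or_eq_succ i with h | ⟨j, rfl⟩
  · subst h; simpa using hst
  · simpa using hxy j

/-- FKG-type negative-correlation inequality for an anticorrelated pair measure. -/
lemma corr_le (a b : ℝ) (ha : 0 ≤ a) (hb : 0 ≤ b) (ha4 : a ≤ 1/4) (hab : a + b = 1/2) :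
    ∀ (n : ℕ) (F G : (Fin n → Bool) → ℝ), MonotoneCube F → MonotoneCube G →
    ∑ x : Fin n → Bool, ∑ y : Fin n → Bool,
        (∏ i, pairW a b (x i) (y i)) * F x * G y
      ≤ (∑ x : Fin n → Bool, F x) * (∑ y : Fin n → Bool, G y) / 4 ^ n := by
  intro n
  induction n with
  | zero =>
    intro F G _ _
    simp
  | succ n ih =>
    intro F G hF hG
    have hw : ∀ s t : Bool, 0 ≤ pairW a b s t := by
      intro s t; unfold pairW; split <;> assumption
    have hFc : ∀ s : Bool, MonotoneCube (fun x : Fin n → Bool => F (Fin.cons s x)) :=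
      fun s x y hxy => hF _ _ (cons_le_cons le_rfl hxy)
    have hGc : ∀ t : Bool, MonotoneCube (fun y : Fin n → Bool => G (Fin.cons t y)) :=
      fun t x y hxy => hG _ _ (cons_le_cons le_rfl hxy)
    have hφm : (∑ x : Fin n → Bool, F (Fin.cons false x))
        ≤ ∑ x : Fin n → Bool, F (Fin.cons true x) :=
      Finset.sum_le_sum fun x _ => hF _ _ (cons_le_cons (by simp) fun i => le_rfl)
    have hψm : (∑ y : Fin n → Bool, G (Fin.cons false y))
        ≤ ∑ y : Fin n → Bool, G (Fin.cons true y) :=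
      Finset.sum_le_sum fun y _ => hG _ _ (cons_le_cons (by simp) fun i => le_rfl)
    have key : ∀ s t : Bool,
        (∑ x : Fin n → Bool, ∑ y : Fin n → Bool,
          (∏ i, pairW a b (x i) (y i)) * F (Fin.cons s x) * G (Fin.cons t y))
        ≤ (∑ x : Fin n → Bool, F (Fin.cons s x)) *
            (∑ y : Fin n → Bool, G (Fin.cons t y)) / 4 ^ n :=
      fun s t => ih _ _ (hFc s) (hGc t)
    calc
      ∑ x : Fin (n+1) → Bool, ∑ y : Fin (n+1) → Bool,
          (∏ i, pairW a b (x i) (y i)) * F x * G y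
        = ∑ s : Bool, ∑ t : Bool, pairW a b s t *
            ∑ x : Fin n → Bool, ∑ y : Fin n → Bool,
              (∏ i, pairW a b (x i) (y i)) * F (Fin.cons s x) * G (Fin.cons t y) := by
          rw [sum_pi_succ]
          refine Finset.sum_congr rfl fun s _ => ?_
          have h1 : (∑ x : Fin n → Bool, ∑ y : Fin (n+1) → Bool,
              (∏ i, pairW a b (Fin.cons (α := fun _ => Bool) s x i) (y i)) *
                F (Fin.cons s x) * G y)
            = ∑ x : Fin n → Bool, ∑ t : Bool, ∑ y : Fin n → Bool,
              (∏ i, pairW a b (Fin.cons (α := fun _ => Bool) s x i)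
                  (Fin.cons (α := fun _ => Bool) t y i)) * F (Fin.cons s x) *
                G (Fin.cons t y) :=
            Finset.sum_congr rfl fun x _ => sum_pi_succ
              (fun y => (∏ i, pairW a b (Fin.cons (α := fun _ => Bool) s x i) (y i)) *
                F (Fin.cons s x) * G y)
          rw [h1, Finset.sum_comm]
          refine Finset.sum_congr rfl fun t _ => ?_
          rw [Finset.mul_sum]
          refine Finset.sum_congr rfl fun x _ => ?_
          rw [Finset.mul_sum]
          refine Finset.sum_congr rfl fun y _ => ?_
          rw [Fin.prod_univ_succ]
          simp only [Fin.cons_zero, Fin.cons_succ]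
          ring
      _ ≤ ∑ s : Bool, ∑ t : Bool, pairW a b s t *
            ((∑ x : Fin n → Bool, F (Fin.cons s x)) *
              (∑ y : Fin n → Bool, G (Fin.cons t y)) / 4 ^ n) := by
          refine Finset.sum_le_sum fun s _ => Finset.sum_le_sum fun t _ => ?_
          exact mul_le_mul_of_nonneg_left (key s t) (hw s t)
      _ ≤ (∑ x : Fin (n+1) → Bool, F x) * (∑ y : Fin (n+1) → Bool, G y) / 4 ^ (n+1) := by
          rw [sum_pi_succ F, sum_pi_succ G]
          simp only [Fintype.sum_bool, pairW, pow_succ]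
          have h4 : (0:ℝ) < 4 ^ n := by positivity
          have hb' : b = 1/2 - a := by linarith
          subst hb'
          set P1 := ∑ x : Fin n → Bool, F (Fin.cons true x)
          set P0 := ∑ x : Fin n → Bool, F (Fin.cons false x)
          set Q1 := ∑ y : Fin n → Bool, G (Fin.cons true y)
          set Q0 := ∑ y : Fin n → Bool, G (Fin.cons false y)
          norm_num
          have h1 : a*(P1*Q1) + (1/2-a)*(P1*Q0) + ((1/2-a)*(P0*Q1) + a*(P0*Q0))
              ≤ (P1+P0)*(Q1+Q0)/4 := by
            nlinarith [mul_nonneg (mul_nonneg (show (0:ℝ) ≤ 1/4 - a by linarith)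
              (sub_nonneg.2 hφm)) (sub_nonneg.2 hψm)]
          calc a * (P1 * Q1 / 4 ^ n) + (1/2-a) * (P1 * Q0 / 4 ^ n) +
                ((1/2-a) * (P0 * Q1 / 4 ^ n) + a * (P0 * Q0 / 4 ^ n))
              = (a*(P1*Q1) + (1/2-a)*(P1*Q0) + ((1/2-a)*(P0*Q1) + a*(P0*Q0))) / 4 ^ n := by
                ring
            _ ≤ ((P1+P0)*(Q1+Q0)/4) / 4 ^ n := by gcongr
            _ = (P1+P0)*(Q1+Q0)/(4^n*4) := by ring

lemma marg_z {n : ℕ} (α β γ : ℝ) (x y : Fin n → Bool) :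
    ∑ z : Fin n → Bool, prProfile α β γ x y z = ∏ i, pairW α (β + γ) (x i) (y i) := by
  unfold prProfile
  rw [← Fintype.piFinset_univ, ← Finset.prod_univ_sum]
  refine Finset.prod_congr rfl fun i _ => ?_
  rw [Fintype.sum_bool]
  cases hx : x i <;> cases hy : y i <;> simp [prTriple, pairW] <;> ring

lemma marg_y {n : ℕ} (α β γ : ℝ) (x z : Fin n → Bool) :
    ∑ y : Fin n → Bool, prProfile α β γ x y z = ∏ i, pairW γ (α + β) (x i) (z i) := by
  unfold prProfile
  rw [← Fintype.piFinset_univ,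
    ← Finset.prod_univ_sum (fun _ => (univ : Finset Bool))
      (fun i j => prTriple α β γ (x i) j (z i))]
  refine Finset.prod_congr rfl fun i _ => ?_
  rw [Fintype.sum_bool]
  cases hx : x i <;> cases hz : z i <;> simp [prTriple, pairW] <;> ring

lemma marg_x {n : ℕ} (α β γ : ℝ) (y z : Fin n → Bool) :
    ∑ x : Fin n → Bool, prProfile α β γ x y z = ∏ i, pairW β (α + γ) (y i) (z i) := by
  unfold prProfile
  rw [← Fintype.piFinset_univ,
    ← Finset.prod_univ_sum (fun _ => (univ : Finset Bool))
      (fun i j => prTriple α β γ j (y i) (z i))]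
  refine Finset.prod_congr rfl fun i _ => ?_
  rw [Fintype.sum_bool]
  cases hy : y i <;> cases hz : z i <;> simp [prTriple, pairW] <;> ring

lemma sum_pairW {n : ℕ} (a b : ℝ) (x : Fin n → Bool) :
    ∑ y : Fin n → Bool, ∏ i, pairW a b (x i) (y i) = (a + b) ^ n := by
  rw [← Fintype.piFinset_univ, ← Finset.prod_univ_sum]
  rw [show ∏ i : Fin n, (∑ j : Bool, pairW a b (x i) j) = ∏ i : Fin n, (a + b) from
    Finset.prod_congr rfl fun i _ => by
      rw [Fintype.sum_bool]; cases x i <;> simp [pairW] <;> ring]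
  simp


/-- for monotone choice functions and an even product
distribution with `α, β, γ ≤ 1/4`,
`W(f,g,h) ≤ p₁p₂p₃ + (1-p₁)(1-p₂)(1-p₃)`. -/
theorem monotone_irrationality_upper_bound {n : ℕ} (hn : 1 ≤ n)
    (α β γ : ℝ) (hα₀ : 0 ≤ α) (hβ₀ : 0 ≤ β) (hγ₀ : 0 ≤ γ)
    (hα : α ≤ 1 / 4) (hβ : β ≤ 1 / 4) (hγ : γ ≤ 1 / 4)
    (hsum : α + β + γ = 1 / 2)
    (f g h : (Fin n → Bool) → ℝ)
    (hf : IsBooleanFn f) (hg : IsBooleanFn g) (hh : IsBooleanFn h)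
    (hfm : MonotoneCube f) (hgm : MonotoneCube g) (hhm : MonotoneCube h) :
    W α β γ f g h ≤
      expect f * expect g * expect h +
        (1 - expect f) * (1 - expect g) * (1 - expect h) := by
  classical
  have hcard : ((Finset.univ : Finset (Fin n → Bool)).card : ℝ) = 2 ^ n := by
    simp [Fintype.card_fun]
  have h2pos : (0:ℝ) < 2 ^ n := by positivity
  -- Split W into a constant part and three pairwise-correlation parts.
  have hWsplit : W α β γ f g h =
      (∑ x : Fin n → Bool, ∑ y : Fin n → Bool, ∑ z : Fin n → Bool,
          prProfile α β γ x y z) / 4 +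
      (∑ x : Fin n → Bool, ∑ y : Fin n → Bool, ∑ z : Fin n → Bool,
          prProfile α β γ x y z * ((2 * f x - 1) * (2 * g y - 1))) / 4 +
      (∑ x : Fin n → Bool, ∑ y : Fin n → Bool, ∑ z : Fin n → Bool,
          prProfile α β γ x y z * ((2 * f x - 1) * (2 * h z - 1))) / 4 +
      (∑ x : Fin n → Bool, ∑ y : Fin n → Bool, ∑ z : Fin n → Bool,
          prProfile α β γ x y z * ((2 * g y - 1) * (2 * h z - 1))) / 4 := by
    unfold W
    calc
      ∑ x : Fin n → Bool, ∑ y : Fin n → Bool, ∑ z : Fin n → Bool,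
          prProfile α β γ x y z *
            (f x * g y * h z + (1 - f x) * (1 - g y) * (1 - h z))
        = ∑ x : Fin n → Bool, ∑ y : Fin n → Bool, ∑ z : Fin n → Bool,
            (prProfile α β γ x y z / 4 +
             prProfile α β γ x y z * ((2 * f x - 1) * (2 * g y - 1)) / 4 +
             prProfile α β γ x y z * ((2 * f x - 1) * (2 * h z - 1)) / 4 +
             prProfile α β γ x y z * ((2 * g y - 1) * (2 * h z - 1)) / 4) := by
          refine Finset.sum_congr rfl fun x _ => Finset.sum_congr rfl fun y _ =>
            Finset.sum_congr rfl fun z _ => ?_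
          ring
      _ = _ := by
          simp only [Finset.sum_add_distrib, Finset.sum_div]
  -- total mass is 1
  have hT0 : (∑ x : Fin n → Bool, ∑ y : Fin n → Bool, ∑ z : Fin n → Bool,
      prProfile α β γ x y z) = 1 := by
    have h1 : ∀ x : Fin n → Bool, (∑ y : Fin n → Bool, ∑ z : Fin n → Bool,
        prProfile α β γ x y z) = ((1:ℝ)/2) ^ n := by
      intro x
      rw [show (∑ y : Fin n → Bool, ∑ z : Fin n → Bool, prProfile α β γ x y z)
          = ∑ y : Fin n → Bool, ∏ i, pairW α (β + γ) (x i) (y i) from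
        Finset.sum_congr rfl fun y _ => marg_z α β γ x y]
      rw [sum_pairW]
      norm_num [show α + (β + γ) = 1/2 by linarith]
    rw [Finset.sum_congr rfl fun x _ => h1 x, Finset.sum_const, nsmul_eq_mul, hcard]
    rw [← mul_pow]
    norm_num
  -- pairwise terms
  have hTA : (∑ x : Fin n → Bool, ∑ y : Fin n → Bool, ∑ z : Fin n → Bool,
      prProfile α β γ x y z * ((2 * f x - 1) * (2 * g y - 1)))
      = ∑ x : Fin n → Bool, ∑ y : Fin n → Bool,
          (∏ i, pairW α (β + γ) (x i) (y i)) * (2 * f x - 1) * (2 * g y - 1) := by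
    refine Finset.sum_congr rfl fun x _ => Finset.sum_congr rfl fun y _ => ?_
    rw [← Finset.sum_mul, marg_z, mul_assoc]
  have hTB : (∑ x : Fin n → Bool, ∑ y : Fin n → Bool, ∑ z : Fin n → Bool,
      prProfile α β γ x y z * ((2 * f x - 1) * (2 * h z - 1)))
      = ∑ x : Fin n → Bool, ∑ z : Fin n → Bool,
          (∏ i, pairW γ (α + β) (x i) (z i)) * (2 * f x - 1) * (2 * h z - 1) := by
    refine Finset.sum_congr rfl fun x _ => ?_
    rw [Finset.sum_comm]
    refine Finset.sum_congr rfl fun z _ => ?_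
    rw [← Finset.sum_mul, marg_y, mul_assoc]
  have hTC : (∑ x : Fin n → Bool, ∑ y : Fin n → Bool, ∑ z : Fin n → Bool,
      prProfile α β γ x y z * ((2 * g y - 1) * (2 * h z - 1)))
      = ∑ y : Fin n → Bool, ∑ z : Fin n → Bool,
          (∏ i, pairW β (α + γ) (y i) (z i)) * (2 * g y - 1) * (2 * h z - 1) := by
    rw [Finset.sum_comm]
    refine Finset.sum_congr rfl fun y _ => ?_
    rw [Finset.sum_comm]
    refine Finset.sum_congr rfl fun z _ => ?_
    rw [← Finset.sum_mul, marg_x, mul_assoc]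
  -- monotonicity of the ±1 versions
  have hFm : MonotoneCube (fun x : Fin n → Bool => 2 * f x - 1) := by
    intro x y hxy; have := hfm x y hxy; simp only; linarith
  have hGm : MonotoneCube (fun x : Fin n → Bool => 2 * g x - 1) := by
    intro x y hxy; have := hgm x y hxy; simp only; linarith
  have hHm : MonotoneCube (fun x : Fin n → Bool => 2 * h x - 1) := by
    intro x y hxy; have := hhm x y hxy; simp only; linarith
  -- apply the correlation inequality three times
  have hA := corr_le α (β + γ) hα₀ (by linarith) hα (by linarith) n
    (fun x => 2 * f x - 1) (fun y => 2 * g y - 1) hFm hGm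
  have hB := corr_le γ (α + β) hγ₀ (by linarith) hγ (by linarith) n
    (fun x => 2 * f x - 1) (fun z => 2 * h z - 1) hFm hHm
  have hC := corr_le β (α + γ) hβ₀ (by linarith) hβ (by linarith) n
    (fun y => 2 * g y - 1) (fun z => 2 * h z - 1) hGm hHm
  -- sums of the ±1 versions
  have hSF : (∑ x : Fin n → Bool, (2 * f x - 1)) = 2 * (∑ x : Fin n → Bool, f x) - 2 ^ n := by
    rw [Finset.sum_sub_distrib, ← Finset.mul_sum]
    simp [hcard]
  have hSG : (∑ x : Fin n → Bool, (2 * g x - 1)) = 2 * (∑ x : Fin n → Bool, g x) - 2 ^ n := by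
    rw [Finset.sum_sub_distrib, ← Finset.mul_sum]
    simp [hcard]
  have hSH : (∑ x : Fin n → Bool, (2 * h x - 1)) = 2 * (∑ x : Fin n → Bool, h x) - 2 ^ n := by
    rw [Finset.sum_sub_distrib, ← Finset.mul_sum]
    simp [hcard]
  rw [hSF, hSG] at hA
  rw [hSF, hSH] at hB
  rw [hSG, hSH] at hC
  -- rewrite the target
  have h2ne : ((2:ℝ) ^ n) ≠ 0 := ne_of_gt h2pos
  have h4eq : ((4:ℝ) ^ n) = 2 ^ n * 2 ^ n := by
    rw [← mul_pow]; norm_num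
  have hGoalEq : expect f * expect g * expect h +
      (1 - expect f) * (1 - expect g) * (1 - expect h)
      = 1 / 4 +
        ((2 * (∑ x : Fin n → Bool, f x) - 2 ^ n) *
         (2 * (∑ x : Fin n → Bool, g x) - 2 ^ n) / 4 ^ n) / 4 +
        ((2 * (∑ x : Fin n → Bool, f x) - 2 ^ n) *
         (2 * (∑ x : Fin n → Bool, h x) - 2 ^ n) / 4 ^ n) / 4 +
        ((2 * (∑ x : Fin n → Bool, g x) - 2 ^ n) *
         (2 * (∑ x : Fin n → Bool, h x) - 2 ^ n) / 4 ^ n) / 4 := by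
    unfold expect
    rw [h4eq]
    field_simp
    ring
  rw [hWsplit, hT0, hTA, hTB, hTC, hGoalEq]
  linarith [hA, hB, hC]

end GSWF
end
end

section
/- Consider a GSWF on three alternatives with n voters satisfying the IIA condition, whose choice functions f, g, h : {0,1}^n → {0,1} are balanced (E[f] = E[g] = E[h] = 1/2). If the individual preferences are independent and uniformly distributed (i.e., distributed according to D(1/6,1/6,1/6)), then the probability of a rational choice is at least 5/8; equivalently, W(f,g,h) ≤ 3/8. -/
open Finset Real

noncomputable section

namespace GSWF

/- ===== auxiliary machinery for the proof ===== -/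

private def sgn (b : Bool) : ℝ := if b then 1 else -1

private lemma sum_pi_bool {n : ℕ} (F : Fin n → Bool → ℝ) :
    ∑ z : Fin n → Bool, ∏ i, F i (z i) = ∏ i, (F i false + F i true) := by
  classical
  have h := Finset.prod_univ_sum (t := fun _ : Fin n => (Finset.univ : Finset Bool)) (f := F)
  rw [Fintype.piFinset_univ] at h
  rw [← h]
  exact Finset.prod_congr rfl fun i _ => by rw [Fintype.sum_bool]; ring

private lemma prod_add_expansion {n : ℕ} (δ : ℝ) (x y : Fin n → Bool) :
    ∏ i, (1 + δ * (sgn (x i) * sgn (y i)))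
      = ∑ S : Finset (Fin n), δ ^ S.card * (walsh S x * walsh S y) := by
  classical
  have h1 : ∀ i : Fin n, (1:ℝ) + δ * (sgn (x i) * sgn (y i))
      = δ * (sgn (x i) * sgn (y i)) + 1 := fun i => by ring
  simp_rw [h1]
  rw [Finset.prod_add, Finset.powerset_univ]
  apply Finset.sum_congr rfl
  intro S _
  rw [Finset.prod_const_one, mul_one, Finset.prod_mul_distrib, Finset.prod_const]
  unfold walsh sgn
  rw [Finset.prod_mul_distrib]

private lemma coeff_mul_pow {n : ℕ} (f : (Fin n → Bool) → ℝ) (S : Finset (Fin n)) :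
    (∑ x : Fin n → Bool, f x * walsh S x) = coeff f S * 2 ^ n := by
  unfold coeff
  field_simp

private lemma pair_kernel_sum {n : ℕ} (δ : ℝ) (f g : (Fin n → Bool) → ℝ) :
    ∑ x : Fin n → Bool, ∑ y : Fin n → Bool,
        f x * g y * ∏ i, (1 + δ * (sgn (x i) * sgn (y i)))
      = (4:ℝ)^n * ∑ S : Finset (Fin n), coeff f S * coeff g S * δ ^ S.card := by
  classical
  have step : ∀ x y : Fin n → Bool,
      f x * g y * ∏ i, (1 + δ * (sgn (x i) * sgn (y i)))
      = ∑ S : Finset (Fin n), δ ^ S.card * ((f x * walsh S x) * (g y * walsh S y)) := by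
    intro x y
    rw [prod_add_expansion, Finset.mul_sum]
    exact Finset.sum_congr rfl fun S _ => by ring
  simp_rw [step]
  have sw1 : ∀ x : Fin n → Bool, ∑ y : Fin n → Bool, ∑ S : Finset (Fin n),
      δ ^ S.card * ((f x * walsh S x) * (g y * walsh S y))
      = ∑ S : Finset (Fin n), ∑ y : Fin n → Bool,
      δ ^ S.card * ((f x * walsh S x) * (g y * walsh S y)) := fun x => Finset.sum_comm
  simp_rw [sw1]
  rw [Finset.sum_comm, Finset.mul_sum]
  apply Finset.sum_congr rfl
  intro S _
  have e2 : ∑ x : Fin n → Bool, ∑ y : Fin n → Bool,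
      δ ^ S.card * ((f x * walsh S x) * (g y * walsh S y))
      = δ ^ S.card * ((∑ x : Fin n → Bool, f x * walsh S x) *
          (∑ y : Fin n → Bool, g y * walsh S y)) := by
    rw [Finset.sum_mul_sum, Finset.mul_sum]
    exact Finset.sum_congr rfl fun x _ => by rw [Finset.mul_sum]
  rw [e2, coeff_mul_pow, coeff_mul_pow]
  have h4 : ((4:ℝ))^n = 2^n * 2^n := by rw [← mul_pow]; norm_num
  rw [h4]; ring

private lemma sum_walsh_mul {n : ℕ} (x y : Fin n → Bool) :
    ∑ S : Finset (Fin n), walsh S x * walsh S y = if x = y then (2:ℝ)^n else 0 := by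
  classical
  have h := prod_add_expansion (n := n) 1 x y
  simp only [one_pow, one_mul] at h
  rw [← h]
  by_cases hxy : x = y
  · subst hxy
    rw [if_pos rfl]
    have h2 : ∀ i : Fin n, (1:ℝ) + sgn (x i) * sgn (x i) = 2 := by
      intro i; cases hx : x i <;> simp [sgn] <;> norm_num
    simp_rw [h2]
    rw [Finset.prod_const]
    simp
  · rw [if_neg hxy]
    have hex : ∃ i, x i ≠ y i := by
      by_contra hc
      push_neg at hc
      exact hxy (funext hc)
    obtain ⟨i, hi⟩ := hex
    apply Finset.prod_eq_zero (Finset.mem_univ i)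
    cases hx : x i <;> cases hy : y i <;> simp_all [sgn]

private lemma parseval {n : ℕ} (f g : (Fin n → Bool) → ℝ) :
    ∑ S : Finset (Fin n), coeff f S * coeff g S
      = (∑ x : Fin n → Bool, f x * g x) / 2 ^ n := by
  classical
  have e1 : ∀ S : Finset (Fin n), coeff f S * coeff g S
      = (∑ x : Fin n → Bool, ∑ y : Fin n → Bool,
          f x * g y * (walsh S x * walsh S y)) / 4 ^ n := by
    intro S
    unfold coeff
    rw [div_mul_div_comm, Finset.sum_mul_sum]
    have h4 : ((2:ℝ))^n * 2^n = 4^n := by rw [← mul_pow]; norm_num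
    rw [h4]
    congr 1
    exact Finset.sum_congr rfl fun x _ => Finset.sum_congr rfl fun y _ => by ring
  simp_rw [e1, ← Finset.sum_div]
  have num : ∑ S : Finset (Fin n), ∑ x : Fin n → Bool, ∑ y : Fin n → Bool,
      f x * g y * (walsh S x * walsh S y)
      = (∑ x : Fin n → Bool, f x * g x) * 2 ^ n := by
    rw [Finset.sum_comm]
    have sw : ∀ x : Fin n → Bool, (∑ S : Finset (Fin n), ∑ y : Fin n → Bool,
        f x * g y * (walsh S x * walsh S y))
        = ∑ y : Fin n → Bool, ∑ S : Finset (Fin n),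
        f x * g y * (walsh S x * walsh S y) := fun x => Finset.sum_comm
    simp_rw [sw]
    rw [Finset.sum_mul]
    apply Finset.sum_congr rfl
    intro x _
    have e3 : ∀ y : Fin n → Bool, ∑ S : Finset (Fin n), f x * g y * (walsh S x * walsh S y)
        = f x * g y * (if x = y then (2:ℝ)^n else 0) := by
      intro y
      rw [← sum_walsh_mul x y, Finset.mul_sum]
    simp_rw [e3]
    simp [mul_ite, mul_zero]
  rw [num]
  have h4 : ((4:ℝ))^n = 2^n * 2^n := by rw [← mul_pow]; norm_num
  have h2 : ((2:ℝ))^n ≠ 0 := by positivity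
  rw [h4]
  field_simp

private lemma walsh_empty {n : ℕ} (x : Fin n → Bool) : walsh ∅ x = 1 := by
  simp [walsh]

private lemma coeff_empty {n : ℕ} (f : (Fin n → Bool) → ℝ) : coeff f ∅ = expect f := by
  simp [coeff, expect, walsh_empty]

private lemma pz (a b : Bool) :
    prTriple (1/6) (1/6) (1/6) a b false + prTriple (1/6) (1/6) (1/6) a b true
      = (1/4) * (1 + (-(1/3)) * (sgn a * sgn b)) := by
  cases a <;> cases b <;> norm_num [prTriple, sgn]

private lemma py (a c : Bool) :
    prTriple (1/6) (1/6) (1/6) a false c + prTriple (1/6) (1/6) (1/6) a true c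
      = (1/4) * (1 + (-(1/3)) * (sgn a * sgn c)) := by
  cases a <;> cases c <;> norm_num [prTriple, sgn]

private lemma px (b c : Bool) :
    prTriple (1/6) (1/6) (1/6) false b c + prTriple (1/6) (1/6) (1/6) true b c
      = (1/4) * (1 + (-(1/3)) * (sgn b * sgn c)) := by
  cases b <;> cases c <;> norm_num [prTriple, sgn]

private lemma Kz {n : ℕ} (x y : Fin n → Bool) :
    ∑ z : Fin n → Bool, prProfile (1/6) (1/6) (1/6) x y z
      = ∏ i, ((1/4:ℝ) * (1 + (-(1/3)) * (sgn (x i) * sgn (y i)))) := by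
  unfold prProfile
  rw [sum_pi_bool (fun i c => prTriple (1/6) (1/6) (1/6) (x i) (y i) c)]
  exact Finset.prod_congr rfl fun i _ => pz (x i) (y i)

private lemma Ky {n : ℕ} (x z : Fin n → Bool) :
    ∑ y : Fin n → Bool, prProfile (1/6) (1/6) (1/6) x y z
      = ∏ i, ((1/4:ℝ) * (1 + (-(1/3)) * (sgn (x i) * sgn (z i)))) := by
  unfold prProfile
  rw [sum_pi_bool (fun i b => prTriple (1/6) (1/6) (1/6) (x i) b (z i))]
  exact Finset.prod_congr rfl fun i _ => py (x i) (z i)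

private lemma Kx {n : ℕ} (y z : Fin n → Bool) :
    ∑ x : Fin n → Bool, prProfile (1/6) (1/6) (1/6) x y z
      = ∏ i, ((1/4:ℝ) * (1 + (-(1/3)) * (sgn (y i) * sgn (z i)))) := by
  unfold prProfile
  rw [sum_pi_bool (fun i a => prTriple (1/6) (1/6) (1/6) a (y i) (z i))]
  exact Finset.prod_congr rfl fun i _ => px (y i) (z i)

private lemma prod_quarter {n : ℕ} (u v : Fin n → Bool) :
    ∏ i, ((1/4:ℝ) * (1 + (-(1/3)) * (sgn (u i) * sgn (v i))))
      = (1/4:ℝ)^n * ∏ i, (1 + (-(1/3)) * (sgn (u i) * sgn (v i))) := by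
  rw [Finset.prod_mul_distrib, Finset.prod_const, Finset.card_univ, Fintype.card_fin]

private lemma sum_half_snd {n : ℕ} (u : Fin n → Bool) :
    ∑ v : Fin n → Bool, ∏ i, ((1/4:ℝ) * (1 + (-(1/3)) * (sgn (u i) * sgn (v i))))
      = (1/2:ℝ)^n := by
  rw [sum_pi_bool (fun i b => (1/4:ℝ) * (1 + (-(1/3)) * (sgn (u i) * sgn b)))]
  have h : ∀ i : Fin n, (1/4:ℝ) * (1 + (-(1/3)) * (sgn (u i) * sgn false))
      + (1/4:ℝ) * (1 + (-(1/3)) * (sgn (u i) * sgn true)) = 1/2 := by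
    intro i; cases hu : u i <;> norm_num [sgn]
  simp_rw [h]
  rw [Finset.prod_const, Finset.card_univ, Fintype.card_fin]

private lemma sum_half_fst {n : ℕ} (v : Fin n → Bool) :
    ∑ u : Fin n → Bool, ∏ i, ((1/4:ℝ) * (1 + (-(1/3)) * (sgn (u i) * sgn (v i))))
      = (1/2:ℝ)^n := by
  rw [sum_pi_bool (fun i a => (1/4:ℝ) * (1 + (-(1/3)) * (sgn a * sgn (v i))))]
  have h : ∀ i : Fin n, (1/4:ℝ) * (1 + (-(1/3)) * (sgn false * sgn (v i)))
      + (1/4:ℝ) * (1 + (-(1/3)) * (sgn true * sgn (v i))) = 1/2 := by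
    intro i; cases hv : v i <;> norm_num [sgn]
  simp_rw [h]
  rw [Finset.prod_const, Finset.card_univ, Fintype.card_fin]

private lemma card_cube {n : ℕ} : (Finset.univ : Finset (Fin n → Bool)).card = 2^n := by
  simp

private lemma key_ineq (a b c : ℝ) (k : ℕ) (hk : 1 ≤ k) :
    (a*b + a*c + b*c) * (-(1/3):ℝ)^k ≤ (1/6)*(a*a+b*b+c*c) := by
  have hsq : a*a+b*b+c*c = a^2+b^2+c^2 := by ring
  rw [hsq]
  have hq : (0:ℝ) ≤ a^2+b^2+c^2 := by positivity
  have hub : a*b+a*c+b*c ≤ a^2+b^2+c^2 := by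
    nlinarith [sq_nonneg (a-b), sq_nonneg (a-c), sq_nonneg (b-c)]
  have hlb : -(a^2+b^2+c^2)/2 ≤ a*b+a*c+b*c := by nlinarith [sq_nonneg (a+b+c)]
  rcases Nat.even_or_odd k with he | ho
  · have hk2 : 2 ≤ k := by obtain ⟨m, rfl⟩ := he; omega
    have hpow : ((-(1/3):ℝ))^k = (1/3)^k := he.neg_pow _
    have ht : ((1/3:ℝ))^k ≤ (1/3)^2 := pow_le_pow_of_le_one (by norm_num) (by norm_num) hk2
    have ht0 : (0:ℝ) ≤ (1/3:ℝ)^k := by positivity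
    rw [hpow]
    calc (a*b+a*c+b*c) * (1/3:ℝ)^k ≤ (a^2+b^2+c^2) * (1/3)^k :=
          mul_le_mul_of_nonneg_right hub ht0
    _ ≤ (a^2+b^2+c^2) * (1/3)^2 := mul_le_mul_of_nonneg_left ht hq
    _ ≤ (1/6)*(a^2+b^2+c^2) := by nlinarith
  · have hpow : ((-(1/3):ℝ))^k = -((1/3:ℝ)^k) := ho.neg_pow _
    have ht : ((1/3:ℝ))^k ≤ (1/3)^1 := pow_le_pow_of_le_one (by norm_num) (by norm_num) hk
    have ht0 : (0:ℝ) ≤ (1/3:ℝ)^k := by positivity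
    rw [hpow]
    have hr : (a*b+a*c+b*c) * -((1/3:ℝ)^k) = (-(a*b+a*c+b*c)) * (1/3)^k := by ring
    rw [hr]
    calc (-(a*b+a*c+b*c)) * (1/3:ℝ)^k ≤ ((a^2+b^2+c^2)/2) * (1/3)^k :=
          mul_le_mul_of_nonneg_right (by linarith) ht0
    _ ≤ ((a^2+b^2+c^2)/2) * (1/3)^1 := mul_le_mul_of_nonneg_left ht (by positivity)
    _ ≤ (1/6)*(a^2+b^2+c^2) := by nlinarith


/-- for balanced choice functions and uniform preferences,
the probability of a rational choice is at least 5/8, i.e.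
`W(f,g,h) ≤ 3/8`. -/
theorem balanced_rationality_lower_bound {n : ℕ} (hn : 1 ≤ n)
    (f g h : (Fin n → Bool) → ℝ)
    (hf : IsBooleanFn f) (hg : IsBooleanFn g) (hh : IsBooleanFn h)
    (hfb : expect f = 1 / 2) (hgb : expect g = 1 / 2)
    (hhb : expect h = 1 / 2) :
    W (1 / 6) (1 / 6) (1 / 6) f g h ≤ 3 / 8 := by
  classical
  have h2n : ((2:ℝ))^n ≠ 0 := by positivity
  -- sums of balanced functions
  have sumf : ∑ x : Fin n → Bool, f x = 2^n * (1/2 : ℝ) := by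
    have hb := hfb; unfold expect at hb
    rw [div_eq_iff h2n] at hb; linarith
  have sumg : ∑ x : Fin n → Bool, g x = 2^n * (1/2 : ℝ) := by
    have hb := hgb; unfold expect at hb
    rw [div_eq_iff h2n] at hb; linarith
  have sumh : ∑ x : Fin n → Bool, h x = 2^n * (1/2 : ℝ) := by
    have hb := hhb; unfold expect at hb
    rw [div_eq_iff h2n] at hb; linarith
  -- expand the summand; the triple products cancel
  have expand : ∀ x y z : Fin n → Bool,
      prProfile (1/6) (1/6) (1/6) x y z *
        (f x * g y * h z + (1 - f x) * (1 - g y) * (1 - h z))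
      = prProfile (1/6) (1/6) (1/6) x y z
        - prProfile (1/6) (1/6) (1/6) x y z * f x
        - prProfile (1/6) (1/6) (1/6) x y z * g y
        - prProfile (1/6) (1/6) (1/6) x y z * h z
        + prProfile (1/6) (1/6) (1/6) x y z * (f x * g y)
        + prProfile (1/6) (1/6) (1/6) x y z * (f x * h z)
        + prProfile (1/6) (1/6) (1/6) x y z * (g y * h z) := by
    intro x y z; ring
  have hW : W (1/6) (1/6) (1/6) f g h
      = (∑ x : Fin n → Bool, ∑ y : Fin n → Bool, ∑ z : Fin n → Bool,
          prProfile (1/6) (1/6) (1/6) x y z)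
        - (∑ x : Fin n → Bool, ∑ y : Fin n → Bool, ∑ z : Fin n → Bool,
          prProfile (1/6) (1/6) (1/6) x y z * f x)
        - (∑ x : Fin n → Bool, ∑ y : Fin n → Bool, ∑ z : Fin n → Bool,
          prProfile (1/6) (1/6) (1/6) x y z * g y)
        - (∑ x : Fin n → Bool, ∑ y : Fin n → Bool, ∑ z : Fin n → Bool,
          prProfile (1/6) (1/6) (1/6) x y z * h z)
        + (∑ x : Fin n → Bool, ∑ y : Fin n → Bool, ∑ z : Fin n → Bool,
          prProfile (1/6) (1/6) (1/6) x y z * (f x * g y))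
        + (∑ x : Fin n → Bool, ∑ y : Fin n → Bool, ∑ z : Fin n → Bool,
          prProfile (1/6) (1/6) (1/6) x y z * (f x * h z))
        + (∑ x : Fin n → Bool, ∑ y : Fin n → Bool, ∑ z : Fin n → Bool,
          prProfile (1/6) (1/6) (1/6) x y z * (g y * h z)) := by
    unfold W
    simp_rw [expand]
    simp only [Finset.sum_add_distrib, Finset.sum_sub_distrib]
  -- marginal over y,z
  have myz : ∀ x : Fin n → Bool, ∑ y : Fin n → Bool, ∑ z : Fin n → Bool,
      prProfile (1/6) (1/6) (1/6) x y z = (1/2:ℝ)^n := by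
    intro x
    calc ∑ y : Fin n → Bool, ∑ z : Fin n → Bool, prProfile (1/6) (1/6) (1/6) x y z
        = ∑ y : Fin n → Bool, ∏ i, ((1/4:ℝ) * (1 + (-(1/3)) * (sgn (x i) * sgn (y i)))) :=
          Finset.sum_congr rfl fun y _ => Kz x y
      _ = (1/2:ℝ)^n := sum_half_snd x
  have pow_half : ((1/2:ℝ))^n * 2^n = 1 := by rw [← mul_pow]; norm_num
  -- the seven sums
  have e0 : ∑ x : Fin n → Bool, ∑ y : Fin n → Bool, ∑ z : Fin n → Bool,
      prProfile (1/6) (1/6) (1/6) x y z = 1 := by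
    simp_rw [myz]
    rw [Finset.sum_const, card_cube, nsmul_eq_mul]
    push_cast
    rw [mul_comm]
    exact pow_half
  have ef : ∑ x : Fin n → Bool, ∑ y : Fin n → Bool, ∑ z : Fin n → Bool,
      prProfile (1/6) (1/6) (1/6) x y z * f x = 1/2 := by
    have h1 : ∀ x : Fin n → Bool, (∑ y : Fin n → Bool, ∑ z : Fin n → Bool,
        prProfile (1/6) (1/6) (1/6) x y z * f x) = (1/2:ℝ)^n * f x := by
      intro x
      simp_rw [← Finset.sum_mul]
      rw [myz x]
    simp_rw [h1]
    rw [← Finset.mul_sum, sumf, ← mul_assoc, pow_half, one_mul]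
  have eg : ∑ x : Fin n → Bool, ∑ y : Fin n → Bool, ∑ z : Fin n → Bool,
      prProfile (1/6) (1/6) (1/6) x y z * g y = 1/2 := by
    rw [Finset.sum_comm]
    have h1 : ∀ y : Fin n → Bool, (∑ x : Fin n → Bool, ∑ z : Fin n → Bool,
        prProfile (1/6) (1/6) (1/6) x y z * g y) = (1/2:ℝ)^n * g y := by
      intro y
      simp_rw [← Finset.sum_mul]
      have h2 : ∑ x : Fin n → Bool, ∑ z : Fin n → Bool,
          prProfile (1/6) (1/6) (1/6) x y z = (1/2:ℝ)^n := by
        calc ∑ x : Fin n → Bool, ∑ z : Fin n → Bool, prProfile (1/6) (1/6) (1/6) x y z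
            = ∑ x : Fin n → Bool, ∏ i, ((1/4:ℝ) * (1 + (-(1/3)) * (sgn (x i) * sgn (y i)))) :=
              Finset.sum_congr rfl fun x _ => Kz x y
          _ = (1/2:ℝ)^n := sum_half_fst y
      rw [h2]
    simp_rw [h1]
    rw [← Finset.mul_sum, sumg, ← mul_assoc, pow_half, one_mul]
  have eh : ∑ x : Fin n → Bool, ∑ y : Fin n → Bool, ∑ z : Fin n → Bool,
      prProfile (1/6) (1/6) (1/6) x y z * h z = 1/2 := by
    have sw1 : ∀ x : Fin n → Bool, ∑ y : Fin n → Bool, ∑ z : Fin n → Bool,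
        prProfile (1/6) (1/6) (1/6) x y z * h z
        = ∑ z : Fin n → Bool, ∑ y : Fin n → Bool,
        prProfile (1/6) (1/6) (1/6) x y z * h z := fun x => Finset.sum_comm
    simp_rw [sw1, ← Finset.sum_mul, Ky]
    rw [Finset.sum_comm]
    have h1 : ∀ z : Fin n → Bool, (∑ x : Fin n → Bool,
        (∏ i, ((1/4:ℝ) * (1 + (-(1/3)) * (sgn (x i) * sgn (z i))))) * h z)
        = (1/2:ℝ)^n * h z := by
      intro z
      rw [← Finset.sum_mul, sum_half_fst z]
    simp_rw [h1]
    rw [← Finset.mul_sum, sumh, ← mul_assoc, pow_half, one_mul]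
  have quarter_four : ((1/4:ℝ))^n * 4^n = 1 := by rw [← mul_pow]; norm_num
  have efg : ∑ x : Fin n → Bool, ∑ y : Fin n → Bool, ∑ z : Fin n → Bool,
      prProfile (1/6) (1/6) (1/6) x y z * (f x * g y)
      = ∑ S : Finset (Fin n), coeff f S * coeff g S * (-(1/3):ℝ)^S.card := by
    have h1 : ∀ x y : Fin n → Bool, (∑ z : Fin n → Bool,
        prProfile (1/6) (1/6) (1/6) x y z * (f x * g y))
        = (1/4:ℝ)^n * (f x * g y * ∏ i, (1 + (-(1/3)) * (sgn (x i) * sgn (y i)))) := by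
      intro x y
      rw [← Finset.sum_mul, Kz, prod_quarter]; ring
    simp_rw [h1, ← Finset.mul_sum]
    rw [pair_kernel_sum, ← mul_assoc, quarter_four, one_mul]
  have efh : ∑ x : Fin n → Bool, ∑ y : Fin n → Bool, ∑ z : Fin n → Bool,
      prProfile (1/6) (1/6) (1/6) x y z * (f x * h z)
      = ∑ S : Finset (Fin n), coeff f S * coeff h S * (-(1/3):ℝ)^S.card := by
    have sw1 : ∀ x : Fin n → Bool, ∑ y : Fin n → Bool, ∑ z : Fin n → Bool,
        prProfile (1/6) (1/6) (1/6) x y z * (f x * h z)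
        = ∑ z : Fin n → Bool, ∑ y : Fin n → Bool,
        prProfile (1/6) (1/6) (1/6) x y z * (f x * h z) := fun x => Finset.sum_comm
    simp_rw [sw1]
    have h1 : ∀ x z : Fin n → Bool, (∑ y : Fin n → Bool,
        prProfile (1/6) (1/6) (1/6) x y z * (f x * h z))
        = (1/4:ℝ)^n * (f x * h z * ∏ i, (1 + (-(1/3)) * (sgn (x i) * sgn (z i)))) := by
      intro x z
      rw [← Finset.sum_mul, Ky, prod_quarter]; ring
    simp_rw [h1, ← Finset.mul_sum]
    rw [pair_kernel_sum, ← mul_assoc, quarter_four, one_mul]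
  have egh : ∑ x : Fin n → Bool, ∑ y : Fin n → Bool, ∑ z : Fin n → Bool,
      prProfile (1/6) (1/6) (1/6) x y z * (g y * h z)
      = ∑ S : Finset (Fin n), coeff g S * coeff h S * (-(1/3):ℝ)^S.card := by
    rw [Finset.sum_comm]
    have sw1 : ∀ y : Fin n → Bool, ∑ x : Fin n → Bool, ∑ z : Fin n → Bool,
        prProfile (1/6) (1/6) (1/6) x y z * (g y * h z)
        = ∑ z : Fin n → Bool, ∑ x : Fin n → Bool,
        prProfile (1/6) (1/6) (1/6) x y z * (g y * h z) := fun y => Finset.sum_comm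
    simp_rw [sw1]
    have h1 : ∀ y z : Fin n → Bool, (∑ x : Fin n → Bool,
        prProfile (1/6) (1/6) (1/6) x y z * (g y * h z))
        = (1/4:ℝ)^n * (g y * h z * ∏ i, (1 + (-(1/3)) * (sgn (y i) * sgn (z i)))) := by
      intro y z
      rw [← Finset.sum_mul, Kx, prod_quarter]; ring
    simp_rw [h1, ← Finset.mul_sum]
    rw [pair_kernel_sum, ← mul_assoc, quarter_four, one_mul]
  -- combine the three quadratic sums
  have combine : (∑ S : Finset (Fin n), coeff f S * coeff g S * (-(1/3):ℝ)^S.card)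
      + (∑ S : Finset (Fin n), coeff f S * coeff h S * (-(1/3):ℝ)^S.card)
      + (∑ S : Finset (Fin n), coeff g S * coeff h S * (-(1/3):ℝ)^S.card)
      = ∑ S : Finset (Fin n),
        (coeff f S * coeff g S + coeff f S * coeff h S + coeff g S * coeff h S)
          * (-(1/3):ℝ)^S.card := by
    rw [← Finset.sum_add_distrib, ← Finset.sum_add_distrib]
    exact Finset.sum_congr rfl fun S _ => by ring
  -- split off the empty set
  have split : ∑ S : Finset (Fin n),
      (coeff f S * coeff g S + coeff f S * coeff h S + coeff g S * coeff h S)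
        * (-(1/3):ℝ)^S.card
      = (∑ S ∈ Finset.univ.erase (∅ : Finset (Fin n)),
          (coeff f S * coeff g S + coeff f S * coeff h S + coeff g S * coeff h S)
            * (-(1/3):ℝ)^S.card)
        + (coeff f (∅ : Finset (Fin n)) * coeff g ∅ + coeff f ∅ * coeff h ∅
            + coeff g ∅ * coeff h ∅) * (-(1/3):ℝ)^(∅ : Finset (Fin n)).card := by
    rw [Finset.sum_erase_add Finset.univ _ (Finset.mem_univ (∅ : Finset (Fin n)))]
  have hQ0 : (coeff f (∅ : Finset (Fin n)) * coeff g ∅ + coeff f ∅ * coeff h ∅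
      + coeff g ∅ * coeff h ∅) * (-(1/3):ℝ)^(∅ : Finset (Fin n)).card = 3/4 := by
    rw [coeff_empty, coeff_empty, coeff_empty, hfb, hgb, hhb, Finset.card_empty, pow_zero]
    norm_num
  -- Parseval sums
  have pfE : ∑ S ∈ Finset.univ.erase (∅ : Finset (Fin n)), coeff f S * coeff f S = 1/4 := by
    have hp := parseval f f
    have hfx : ∀ x : Fin n → Bool, f x * f x = f x := fun x => by
      rcases hf x with h0 | h0 <;> simp [h0]
    simp_rw [hfx] at hp
    rw [sumf] at hp
    have hval : ∑ S : Finset (Fin n), coeff f S * coeff f S = 1/2 := by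
      rw [hp]; field_simp
    have he := Finset.sum_erase_add Finset.univ
      (fun S : Finset (Fin n) => coeff f S * coeff f S) (Finset.mem_univ (∅ : Finset (Fin n)))
    rw [hval] at he
    simp only [coeff_empty, hfb] at he
    linarith
  have pgE : ∑ S ∈ Finset.univ.erase (∅ : Finset (Fin n)), coeff g S * coeff g S = 1/4 := by
    have hp := parseval g g
    have hgx : ∀ x : Fin n → Bool, g x * g x = g x := fun x => by
      rcases hg x with h0 | h0 <;> simp [h0]
    simp_rw [hgx] at hp
    rw [sumg] at hp
    have hval : ∑ S : Finset (Fin n), coeff g S * coeff g S = 1/2 := by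
      rw [hp]; field_simp
    have he := Finset.sum_erase_add Finset.univ
      (fun S : Finset (Fin n) => coeff g S * coeff g S) (Finset.mem_univ (∅ : Finset (Fin n)))
    rw [hval] at he
    simp only [coeff_empty, hgb] at he
    linarith
  have phE : ∑ S ∈ Finset.univ.erase (∅ : Finset (Fin n)), coeff h S * coeff h S = 1/4 := by
    have hp := parseval h h
    have hhx : ∀ x : Fin n → Bool, h x * h x = h x := fun x => by
      rcases hh x with h0 | h0 <;> simp [h0]
    simp_rw [hhx] at hp
    rw [sumh] at hp
    have hval : ∑ S : Finset (Fin n), coeff h S * coeff h S = 1/2 := by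
      rw [hp]; field_simp
    have he := Finset.sum_erase_add Finset.univ
      (fun S : Finset (Fin n) => coeff h S * coeff h S) (Finset.mem_univ (∅ : Finset (Fin n)))
    rw [hval] at he
    simp only [coeff_empty, hhb] at he
    linarith
  -- bound the nonempty part
  have bound : ∑ S ∈ Finset.univ.erase (∅ : Finset (Fin n)),
      (coeff f S * coeff g S + coeff f S * coeff h S + coeff g S * coeff h S)
        * (-(1/3):ℝ)^S.card
      ≤ ∑ S ∈ Finset.univ.erase (∅ : Finset (Fin n)),
      (1/6) * (coeff f S * coeff f S + coeff g S * coeff g S + coeff h S * coeff h S) := by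
    apply Finset.sum_le_sum
    intro S hS
    have hne : S ≠ ∅ := (Finset.mem_erase.mp hS).1
    have hcard : 1 ≤ S.card :=
      Finset.card_pos.mpr (Finset.nonempty_iff_ne_empty.mpr hne)
    exact key_ineq (coeff f S) (coeff g S) (coeff h S) S.card hcard
  have bsum : ∑ S ∈ Finset.univ.erase (∅ : Finset (Fin n)),
      (1/6) * (coeff f S * coeff f S + coeff g S * coeff g S + coeff h S * coeff h S)
      = 1/8 := by
    rw [← Finset.mul_sum, Finset.sum_add_distrib, Finset.sum_add_distrib, pfE, pgE, phE]
    norm_num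
  -- finish
  rw [hW, e0, ef, eg, eh, efg, efh, egh]
  rw [hQ0] at split
  linarith [combine, split, bound, bsum.le, bsum.ge]

end GSWF
end
end
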